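/- In a partial infinitary semigroup, if ∏_{i∈I} a_i is defined and H is a nonempty convex subset of the linearly ordered index set I, then ∏_{i∈H} a_i (with the induced order on H) is also defined. -/
import Mathlib


/-- A partial infinitary semigroup: a type `S` with a partial product
(`none` = undefined) on sequences indexed by linearly ordered types, satisfying
(U) singleton products are defined and equal the unique entry, and
(N) generalized associativity under surjective order-preserving maps. -/
structure PartialInfSemigroup (S : Type) : Type 1 where
  prod : ∀ (I : Type) [LinearOrder I], (I → S) → Option S
  unit : ∀ (I : Type) [LinearOrder I] (a : I → S) (i : I),
      (∀ j, j = i) → prod I a = some (a i)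
  assoc : ∀ (I J : Type) [LinearOrder I] [LinearOrder J] (a : I → S) (π : I → J),
      Function.Surjective π → Monotone π → ∀ s : S, prod I a = some s →
      ∃ p : J → S,
        (∀ j : J, prod {i : I // π i = j} (fun i => a i.1) = some (p j)) ∧
        prod J p = some s

lemma prod_congr_pred {S : Type} (P : PartialInfSemigroup S)
    {I : Type} [LinearOrder I] (a : I → S) {p q : I → Prop} (h : p = q) :
    P.prod {i : I // p i} (fun i => a i.1) = P.prod {i : I // q i} (fun i => a i.1) := by
  subst h; rfl

/-- If a product is defined and `H` is a nonempty convex subset of the index set,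
then the product over `H` (with the induced order) is defined too. -/
theorem stmt1 {S : Type} (P : PartialInfSemigroup S)
    (I : Type) [LinearOrder I] (a : I → S) (s : S)
    (h : P.prod I a = some s)
    (H : Set I) (hne : H.Nonempty)
    (hconv : ∀ x y z : I, x ∈ H → y ∈ H → x < z → z < y → z ∈ H) :
    ∃ t : S, P.prod {i : I // i ∈ H} (fun i => a i.1) = some t := by
  classical
  obtain ⟨h0, hh0⟩ := hne
  set J := {j : I // j ∉ H ∨ j = h0} with hJ
  let π : I → J := fun i => if hi : i ∈ H then ⟨h0, Or.inr rfl⟩ else ⟨i, Or.inl hi⟩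
  have hπ_mem : ∀ i (hi : i ∈ H), π i = ⟨h0, Or.inr rfl⟩ := by
    intro i hi; simp [π, hi]
  have hπ_not : ∀ i (hi : i ∉ H), π i = ⟨i, Or.inl hi⟩ := by
    intro i hi; simp [π, hi]
  have hsurj : Function.Surjective π := by
    rintro ⟨j, hj | hj⟩
    · exact ⟨j, hπ_not j hj⟩
    · subst hj; exact ⟨j, by simp [π, hh0]⟩
  have hmono : Monotone π := by
    intro x y hxy
    by_cases hx : x ∈ H <;> by_cases hy : y ∈ H
    · rw [hπ_mem x hx, hπ_mem y hy]
    · rw [hπ_mem x hx, hπ_not y hy, Subtype.mk_le_mk]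
      by_contra hlt
      push_neg at hlt
      rcases lt_or_eq_of_le hxy with hlt' | rfl
      · exact hy (hconv x h0 y hx hh0 hlt' hlt)
      · exact hy hx
    · rw [hπ_not x hx, hπ_mem y hy, Subtype.mk_le_mk]
      by_contra hlt
      push_neg at hlt
      rcases lt_or_eq_of_le hxy with hlt' | rfl
      · exact hx (hconv h0 y x hh0 hy hlt hlt')
      · exact hx hy
    · rw [hπ_not x hx, hπ_not y hy, Subtype.mk_le_mk]
      exact hxy
  obtain ⟨p, hp1, hp2⟩ := P.assoc I J a π hsurj hmono s h
  have key := hp1 ⟨h0, Or.inr rfl⟩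
  have hpred : (fun i => π i = (⟨h0, Or.inr rfl⟩ : J)) = (fun i => i ∈ H) := by
    funext i
    apply propext
    constructor
    · intro hπi
      by_contra hi
      rw [hπ_not i hi] at hπi
      have : i = h0 := congrArg Subtype.val hπi
      exact hi (this ▸ hh0)
    · intro hi
      exact hπ_mem i hi
  rw [prod_congr_pred P a hpred] at key
  exact ⟨p ⟨h0, Or.inr rfl⟩, key⟩
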